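/- Let σ_1 = (1−u_1²)+(1−u_2²)+(1−u_3²) and σ_3 = (1−u_1²)(1−u_2²)(1−u_3²), where u_1 = √(2(2+√2)) − 1 − √2, u_2 = √(2+√2) − 1, u_3 = 1 + √2 − √(2+√2). Then for every ζ ∈ (0,1], the quantity y = −(32/ζ)·( (ζ²/64)(2 − σ_1) + (1/2 − ζ²σ_3/128)² ) satisfies y < −1, and consequently α = (ζ + y)/8 < 0 and γ = (y − ζ)/6 < 0. -/
import Mathlib


open Real

noncomputable def u1 : ℝ := Real.sqrt (2 * (2 + Real.sqrt 2)) - 1 - Real.sqrt 2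

noncomputable def u2 : ℝ := Real.sqrt (2 + Real.sqrt 2) - 1

noncomputable def u3 : ℝ := 1 + Real.sqrt 2 - Real.sqrt (2 + Real.sqrt 2)

noncomputable def σ1 : ℝ := (1 - u1 ^ 2) + (1 - u2 ^ 2) + (1 - u3 ^ 2)

noncomputable def σ3 : ℝ := (1 - u1 ^ 2) * (1 - u2 ^ 2) * (1 - u3 ^ 2)

private lemma sqlt {a b : ℝ} (h : a < b) (ha : 0 ≤ a) : a ^ 2 < b ^ 2 := by nlinarith

set_option maxHeartbeats 1000000 in
/-- Lemma 4 of the paper (the quarter-circle case `φ = π/2`): for every `ζ ∈ (0,1]`,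
`y = −(32/ζ)((ζ²/64)(2−σ₁) + (1/2 − ζ²σ₃/128)²)` satisfies `y < −1`, and consequently
`α = (ζ+y)/8 < 0` and `γ = (y−ζ)/6 < 0`. -/
theorem stmt_17 (ζ : ℝ) (hζ : ζ ∈ Set.Ioc (0 : ℝ) 1)
    (y : ℝ)
    (hy : y = -(32 / ζ) * ((ζ ^ 2 / 64) * (2 - σ1) + (1 / 2 - ζ ^ 2 * σ3 / 128) ^ 2)) :
    y < -1 ∧ (ζ + y) / 8 < 0 ∧ (y - ζ) / 6 < 0 := by
  obtain ⟨hζ0, hζ1⟩ := hζ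
  have hs0 : (0:ℝ) ≤ Real.sqrt 2 := Real.sqrt_nonneg _
  have hs2 : Real.sqrt 2 ^ 2 = 2 := Real.sq_sqrt (by norm_num)
  have hsl : (1.41:ℝ) < Real.sqrt 2 := by nlinarith
  have hsu : Real.sqrt 2 < 1.42 := by nlinarith
  have ht0 : (0:ℝ) ≤ Real.sqrt (2 + Real.sqrt 2) := Real.sqrt_nonneg _
  have ht2 : Real.sqrt (2 + Real.sqrt 2) ^ 2 = 2 + Real.sqrt 2 := Real.sq_sqrt (by positivity)
  have htl : (1.84:ℝ) < Real.sqrt (2 + Real.sqrt 2) := by nlinarith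
  have htu : Real.sqrt (2 + Real.sqrt 2) < 1.85 := by nlinarith
  have hu0 : (0:ℝ) ≤ Real.sqrt (2 * (2 + Real.sqrt 2)) := Real.sqrt_nonneg _
  have hu2 : Real.sqrt (2 * (2 + Real.sqrt 2)) ^ 2 = 2 * (2 + Real.sqrt 2) :=
    Real.sq_sqrt (by positivity)
  have hul : (2.61:ℝ) < Real.sqrt (2 * (2 + Real.sqrt 2)) := by nlinarith
  have huu : Real.sqrt (2 * (2 + Real.sqrt 2)) < 2.62 := by nlinarith
  have h1l : (0.19:ℝ) < u1 := by unfold u1; linarith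
  have h1u : u1 < 0.21 := by unfold u1; linarith
  have h2l : (0.84:ℝ) < u2 := by unfold u2; linarith
  have h2u : u2 < 0.85 := by unfold u2; linarith
  have h3l : (0.56:ℝ) < u3 := by unfold u3; linarith
  have h3u : u3 < 0.58 := by unfold u3; linarith
  have hq1 : (0.0361:ℝ) < u1 ^ 2 := by
    have := sqlt h1l (by norm_num); linarith [this]
  have hq2 : (0.7056:ℝ) < u2 ^ 2 := by
    have := sqlt h2l (by norm_num); linarith [this]
  have hq3 : (0.3136:ℝ) < u3 ^ 2 := by
    have := sqlt h3l (by norm_num); linarith [this]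
  have hσ1 : σ1 ≤ 2 := by unfold σ1; linarith
  have hr1 : u1 ^ 2 < 0.0441 := by
    have := sqlt h1u (by linarith); linarith [this]
  have hr2 : u2 ^ 2 < 0.7225 := by
    have := sqlt h2u (by linarith); linarith [this]
  have hr3 : u3 ^ 2 < 0.3364 := by
    have := sqlt h3u (by linarith); linarith [this]
  have hf1 : (0:ℝ) < 1 - u1 ^ 2 ∧ 1 - u1 ^ 2 < 1 := ⟨by linarith, by linarith⟩
  have hf2 : (0:ℝ) < 1 - u2 ^ 2 ∧ 1 - u2 ^ 2 < 1 := ⟨by linarith, by linarith⟩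
  have hf3 : (0:ℝ) < 1 - u3 ^ 2 ∧ 1 - u3 ^ 2 < 1 := ⟨by linarith, by linarith⟩
  have hσ3l : (0:ℝ) < σ3 := by unfold σ3; exact mul_pos (mul_pos hf1.1 hf2.1) hf3.1
  have hσ3u : σ3 < 1 := by
    unfold σ3
    nlinarith [hf1.1, hf2.1, hf3.1, hf1.2, hf2.2, hf3.2,
      mul_pos hf1.1 hf2.1]
  -- bound the bracket from below
  have hζ2 : ζ ^ 2 ≤ 1 := by nlinarith
  have hζ2p : 0 < ζ ^ 2 := by positivity
  have hsmall : ζ ^ 2 * σ3 / 128 ≤ 1 / 128 := by nlinarith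
  have hsmall0 : 0 ≤ ζ ^ 2 * σ3 / 128 := by positivity
  have hterm1 : 0 ≤ (ζ ^ 2 / 64) * (2 - σ1) := mul_nonneg (by positivity) (by linarith)
  have hterm2 : ((63:ℝ) / 128) ^ 2 ≤ (1 / 2 - ζ ^ 2 * σ3 / 128) ^ 2 :=
    pow_le_pow_left₀ (by norm_num) (by linarith) 2
  have hnum : ((63:ℝ) / 128) ^ 2 = 3969 / 16384 := by norm_num
  have hQ : (0.24:ℝ) ≤ (ζ ^ 2 / 64) * (2 - σ1) + (1 / 2 - ζ ^ 2 * σ3 / 128) ^ 2 := by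
    rw [hnum] at hterm2; linarith
  have h32 : (32:ℝ) ≤ 32 / ζ := by
    rw [le_div_iff₀ hζ0]; nlinarith
  have hy2 : y ≤ -32 * 0.24 := by
    rw [hy]
    have : (32:ℝ) * 0.24 ≤ (32 / ζ) * ((ζ ^ 2 / 64) * (2 - σ1) + (1 / 2 - ζ ^ 2 * σ3 / 128) ^ 2) := by
      apply mul_le_mul h32 hQ (by norm_num) (by positivity)
    linarith
  refine ⟨by linarith, by linarith, by linarith⟩
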